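/- Let $\{a_k\}_{k\ge 0}$ be a sequence of nonnegative reals, $\rho \in (0,1)$, $C \ge 0$, and $D$ a positive integer, satisfying $a_k \le (1-\rho)\max_{1 \le j \le D} a_{\max(k-j,0)} + C$ for all $k \ge 1$. Then $a_k \le \exp(-\rho \lceil k/D \rceil) a_0 + C/\rho$ for all $k \ge 0$. -/
import Mathlib


theorem stmt_1 (a : ℕ → ℝ) (ρ C : ℝ) (D : ℕ)
    (ha : ∀ k, 0 ≤ a k) (hρ0 : 0 < ρ) (hρ1 : ρ < 1) (hC : 0 ≤ C) (hD : 0 < D)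
    (hrec : ∀ k, 1 ≤ k →
      a k ≤ (1 - ρ) * (Finset.Icc 1 D).sup' (Finset.nonempty_Icc.2 hD) (fun j => a (k - j)) + C) :
    ∀ k, a k ≤ Real.exp (-(ρ * (⌈(k : ℝ) / (D : ℝ)⌉₊ : ℝ))) * a 0 + C / ρ := by
  have h1ρ : (0:ℝ) ≤ 1 - ρ := by linarith
  have hCρ : 0 ≤ C / ρ := div_nonneg hC hρ0.le
  have hDR : (0:ℝ) < (D:ℝ) := by exact_mod_cast hD
  have key : ∀ k, a k ≤ (1-ρ) ^ (⌈(k : ℝ) / (D : ℝ)⌉₊) * a 0 + C / ρ := by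
    intro k
    induction k using Nat.strong_induction_on with
    | _ k ih =>
      rcases Nat.eq_zero_or_pos k with rfl | hk
      · simp only [Nat.cast_zero, zero_div, Nat.ceil_zero, pow_zero, one_mul]
        linarith [ha 0]
      · have hm1 : 1 ≤ ⌈(k : ℝ) / (D : ℝ)⌉₊ := by
          rw [Nat.one_le_ceil_iff]
          have : (0:ℝ) < (k:ℝ) := by exact_mod_cast hk
          positivity
        set m := ⌈(k : ℝ) / (D : ℝ)⌉₊ with hm
        have hsup : (Finset.Icc 1 D).sup' (Finset.nonempty_Icc.2 hD) (fun j => a (k - j))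
            ≤ (1-ρ)^(m-1) * a 0 + C / ρ := by
          apply Finset.sup'_le
          intro j hj
          obtain ⟨hj1, hjD⟩ := Finset.mem_Icc.mp hj
          have hlt : k - j < k := Nat.sub_lt hk hj1
          refine (ih (k - j) hlt).trans ?_
          have he : m - 1 ≤ ⌈((k-j:ℕ):ℝ)/D⌉₊ := by
            have hnat : k ≤ (k - j) + D := by omega
            have h1 : (k:ℝ)/D ≤ (((k-j:ℕ):ℝ) + D)/D := by
              gcongr
              exact_mod_cast hnat
            have h2 : (((k-j:ℕ):ℝ) + D)/D = ((k-j:ℕ):ℝ)/D + 1 := by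
              field_simp
            have h3 : m ≤ ⌈((k-j:ℕ):ℝ)/D + 1⌉₊ := Nat.ceil_le_ceil (h2 ▸ h1)
            have h4 : ⌈((k-j:ℕ):ℝ)/D + 1⌉₊ = ⌈((k-j:ℕ):ℝ)/D⌉₊ + 1 :=
              Nat.ceil_add_one (by positivity)
            omega
          have hpow : (1-ρ)^(⌈((k-j:ℕ):ℝ)/D⌉₊) ≤ (1-ρ)^(m-1) :=
            pow_le_pow_of_le_one h1ρ (by linarith) he
          have := mul_le_mul_of_nonneg_right hpow (ha 0)
          linarith
        calc a k ≤ (1-ρ) * ((1-ρ)^(m-1) * a 0 + C/ρ) + C := by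
              refine (hrec k hk).trans ?_
              gcongr
          _ = (1-ρ) * (1-ρ)^(m-1) * a 0 + ((1-ρ)*(C/ρ) + C) := by ring
          _ = (1-ρ)^m * a 0 + C/ρ := by
              rw [← pow_succ']
              congr 1
              · congr 2
                omega
              · field_simp
                ring
  intro k
  refine (key k).trans ?_
  gcongr
  · exact ha 0
  have hexp : 1 - ρ ≤ Real.exp (-ρ) := by
    linarith [Real.add_one_le_exp (-ρ)]
  calc (1-ρ) ^ (⌈(k : ℝ) / (D : ℝ)⌉₊) ≤ Real.exp (-ρ) ^ (⌈(k : ℝ) / (D : ℝ)⌉₊) :=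
        pow_le_pow_left₀ h1ρ hexp _
    _ = Real.exp (-(ρ * (⌈(k : ℝ) / (D : ℝ)⌉₊ : ℝ))) := by
        rw [← Real.exp_nat_mul]
        ring_nf
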